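/- (Error propagation under state-action coverage.) Let d^D be a distribution on S×A and C_π ≥ 0 be such that d^π(s,a) ≤ C_π · d^D(s,a) for all (s,a). Then for any function f : S×A → ℝ, |J_f(π) − J(π)| ≤ (√C_π / (1−γ)) · √(E_{(s,a)~d^D}[(f(s,a) − (T^π f)(s,a))²]). -/

import Mathlib

open scoped BigOperators
set_option maxHeartbeats 2000000

noncomputable section

/-- The policy-specific Bellman operator:
`(T^π f)(s,a) = R(s,a) + γ E_{s' ~ P(·|s,a)}[f(s',π)]`. -/
def bellmanOp {S A : Type*} [Fintype S] [Fintype A] (P : S → A → S → ℝ)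
    (R : S → A → ℝ) (γ : ℝ) (pol : S → A → ℝ) (f : S → A → ℝ) : S → A → ℝ :=
  fun s a => R s a + γ * ∑ s', P s a s' * ∑ a', pol s' a' * f s' a'

/-- `occt P pol d0 t s a = Pr_π[s_t = s, a_t = a]`, the time-`t` state-action
distribution of the stationary policy `pol` started from `d0`. -/
def occt {S A : Type*} [Fintype S] [Fintype A] (P : S → A → S → ℝ)
    (pol : S → A → ℝ) (d0 : S → ℝ) : ℕ → S → A → ℝ
  | 0 => fun s a => d0 s * pol s a
  | (t + 1) => fun s' a' => (∑ s, ∑ a, occt P pol d0 t s a * P s a s') * pol s' a'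

/-- Discounted state-action occupancy `d^π = (1-γ) Σ_t γ^t d_t^π`. -/
def docc {S A : Type*} [Fintype S] [Fintype A] (P : S → A → S → ℝ)
    (pol : S → A → ℝ) (d0 : S → ℝ) (γ : ℝ) (s : S) (a : A) : ℝ :=
  (1 - γ) * ∑' t : ℕ, γ ^ t * occt P pol d0 t s a

/-- Expected discounted return `J(π) = E_π[Σ_t γ^t r_t]`. -/
def Jret {S A : Type*} [Fintype S] [Fintype A] (P : S → A → S → ℝ)
    (R : S → A → ℝ) (γ : ℝ) (pol : S → A → ℝ) (d0 : S → ℝ) : ℝ :=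
  ∑' t : ℕ, γ ^ t * ∑ s, ∑ a, occt P pol d0 t s a * R s a

/-- `J_f(π) = E_{s ~ d0}[f(s,π)]`. -/
def Jf {S A : Type*} [Fintype S] [Fintype A] (d0 : S → ℝ) (pol : S → A → ℝ)
    (f : S → A → ℝ) : ℝ :=
  ∑ s, d0 s * ∑ a, pol s a * f s a

section aux
variable {S A : Type*} [Fintype S] [Fintype A]
variable {P : S → A → S → ℝ} {pol : S → A → ℝ} {d0 : S → ℝ}

lemma occt_nonneg (hP0 : ∀ s a s', 0 ≤ P s a s') (hd00 : ∀ s, 0 ≤ d0 s)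
    (hpol0 : ∀ s a, 0 ≤ pol s a) : ∀ t s a, 0 ≤ occt P pol d0 t s a := by
  intro t
  induction t with
  | zero => intro s a; exact mul_nonneg (hd00 s) (hpol0 s a)
  | succ t ih =>
      intro s a
      exact mul_nonneg (Finset.sum_nonneg fun s' _ => Finset.sum_nonneg fun a' _ =>
        mul_nonneg (ih _ _) (hP0 _ _ _)) (hpol0 s a)

lemma occt_sum (hP1 : ∀ s a, ∑ s', P s a s' = 1)
    (hd01 : ∑ s, d0 s = 1) (hpol1 : ∀ s, ∑ a, pol s a = 1) :
    ∀ t, ∑ s, ∑ a, occt P pol d0 t s a = 1 := by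
  intro t
  induction t with
  | zero => simp only [occt, ← Finset.mul_sum, hpol1, mul_one, hd01]
  | succ t ih =>
      simp only [occt, ← Finset.mul_sum, hpol1, mul_one]
      rw [Finset.sum_comm]
      calc ∑ s, ∑ s', ∑ a, occt P pol d0 t s a * P s a s'
          = ∑ s, ∑ a, occt P pol d0 t s a * ∑ s', P s a s' := by
            refine Finset.sum_congr rfl fun s _ => ?_
            rw [Finset.sum_comm]
            exact Finset.sum_congr rfl fun a _ => (Finset.mul_sum _ _ _).symm
        _ = ∑ s, ∑ a, occt P pol d0 t s a := by simp only [hP1, mul_one]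
        _ = 1 := ih

lemma occt_le_one (hP0 : ∀ s a s', 0 ≤ P s a s') (hP1 : ∀ s a, ∑ s', P s a s' = 1)
    (hd00 : ∀ s, 0 ≤ d0 s) (hd01 : ∑ s, d0 s = 1)
    (hpol0 : ∀ s a, 0 ≤ pol s a) (hpol1 : ∀ s, ∑ a, pol s a = 1)
    (t : ℕ) (s : S) (a : A) : occt P pol d0 t s a ≤ 1 := by
  have h1 : occt P pol d0 t s a ≤ ∑ a', occt P pol d0 t s a' :=
    Finset.single_le_sum (fun a' _ => occt_nonneg hP0 hd00 hpol0 t s a')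
      (Finset.mem_univ a)
  have h2 : ∑ a', occt P pol d0 t s a' ≤ ∑ s', ∑ a', occt P pol d0 t s' a' :=
    Finset.single_le_sum (fun s' _ => Finset.sum_nonneg fun a' _ =>
      occt_nonneg hP0 hd00 hpol0 t s' a') (Finset.mem_univ s)
  calc occt P pol d0 t s a ≤ _ := h1
    _ ≤ _ := h2
    _ = 1 := occt_sum hP1 hd01 hpol1 t

/-- Key one-step identity:
`E_{d_t}[T^π f] = E_{d_t}[R] + γ E_{d_{t+1}}[f]`. -/
lemma occt_bellman_step (R : S → A → ℝ) (γ : ℝ) (f : S → A → ℝ) (t : ℕ) :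
    ∑ s, ∑ a, occt P pol d0 t s a * bellmanOp P R γ pol f s a
      = (∑ s, ∑ a, occt P pol d0 t s a * R s a)
        + γ * ∑ s, ∑ a, occt P pol d0 (t + 1) s a * f s a := by
  have key : ∑ s, ∑ a, occt P pol d0 (t + 1) s a * f s a
      = ∑ s, ∑ a, occt P pol d0 t s a *
          ∑ s', P s a s' * ∑ a', pol s' a' * f s' a' := by
    simp only [occt]
    calc ∑ s', ∑ a', (∑ s, ∑ a, occt P pol d0 t s a * P s a s') * pol s' a' * f s' a'
        = ∑ s', (∑ s, ∑ a, occt P pol d0 t s a * P s a s') *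
            ∑ a', pol s' a' * f s' a' := by
          refine Finset.sum_congr rfl fun s' _ => ?_
          rw [Finset.mul_sum]
          exact Finset.sum_congr rfl fun a' _ => by ring
      _ = ∑ s', ∑ s, ∑ a, occt P pol d0 t s a * P s a s' *
            ∑ a', pol s' a' * f s' a' := by
          refine Finset.sum_congr rfl fun s' _ => ?_
          rw [Finset.sum_mul]
          exact Finset.sum_congr rfl fun s _ => (Finset.sum_mul _ _ _)
      _ = ∑ s, ∑ s', ∑ a, occt P pol d0 t s a * P s a s' *
            ∑ a', pol s' a' * f s' a' := Finset.sum_comm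
      _ = ∑ s, ∑ a, ∑ s', occt P pol d0 t s a * P s a s' *
            ∑ a', pol s' a' * f s' a' := by
          exact Finset.sum_congr rfl fun s _ => Finset.sum_comm
      _ = _ := by
          refine Finset.sum_congr rfl fun s _ => Finset.sum_congr rfl fun a _ => ?_
          rw [Finset.mul_sum]
          exact Finset.sum_congr rfl fun s' _ => by ring
  simp only [bellmanOp]
  rw [key, Finset.mul_sum]
  rw [← Finset.sum_add_distrib]
  refine Finset.sum_congr rfl fun s _ => ?_
  rw [Finset.mul_sum, ← Finset.sum_add_distrib]
  refine Finset.sum_congr rfl fun a _ => by ring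

/-- `Eex P pol d0 h t = E_{d_t}[h]`. -/
def Eex (P : S → A → S → ℝ) (pol : S → A → ℝ) (d0 : S → ℝ)
    (h : S → A → ℝ) (t : ℕ) : ℝ :=
  ∑ s, ∑ a, occt P pol d0 t s a * h s a

variable {γ : ℝ}

lemma Eex_abs_le (hP0 : ∀ s a s', 0 ≤ P s a s') (hP1 : ∀ s a, ∑ s', P s a s' = 1)
    (hd00 : ∀ s, 0 ≤ d0 s) (hd01 : ∑ s, d0 s = 1)
    (hpol0 : ∀ s a, 0 ≤ pol s a) (hpol1 : ∀ s, ∑ a, pol s a = 1)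
    (h : S → A → ℝ) (t : ℕ) :
    |Eex P pol d0 h t| ≤ ∑ s, ∑ a, |h s a| := by
  have honn := occt_nonneg hP0 hd00 hpol0
  have hole := occt_le_one hP0 hP1 hd00 hd01 hpol0 hpol1
  calc |∑ s, ∑ a, occt P pol d0 t s a * h s a|
      ≤ ∑ s, |∑ a, occt P pol d0 t s a * h s a| := Finset.abs_sum_le_sum_abs _ _
    _ ≤ ∑ s, ∑ a, |occt P pol d0 t s a * h s a| :=
        Finset.sum_le_sum fun s _ => Finset.abs_sum_le_sum_abs _ _
    _ ≤ ∑ s, ∑ a, |h s a| := by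
        refine Finset.sum_le_sum fun s _ => Finset.sum_le_sum fun a _ => ?_
        rw [abs_mul, abs_of_nonneg (honn t s a)]
        exact mul_le_of_le_one_left (abs_nonneg _) (hole t s a)

lemma summable_Eex (hP0 : ∀ s a s', 0 ≤ P s a s') (hP1 : ∀ s a, ∑ s', P s a s' = 1)
    (hd00 : ∀ s, 0 ≤ d0 s) (hd01 : ∑ s, d0 s = 1)
    (hpol0 : ∀ s a, 0 ≤ pol s a) (hpol1 : ∀ s, ∑ a, pol s a = 1)
    (hγ0 : 0 ≤ γ) (hγ1 : γ < 1) (h : S → A → ℝ) :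
    Summable (fun t : ℕ => γ ^ t * Eex P pol d0 h t) := by
  refine Summable.of_norm_bounded (g := fun t => γ ^ t * ∑ s, ∑ a, |h s a|)
    ((summable_geometric_of_lt_one hγ0 hγ1).mul_right _) fun t => ?_
  rw [Real.norm_eq_abs, abs_mul, abs_of_nonneg (pow_nonneg hγ0 t)]
  exact mul_le_mul_of_nonneg_left
    (Eex_abs_le hP0 hP1 hd00 hd01 hpol0 hpol1 h t) (pow_nonneg hγ0 t)

lemma summable_occ (hP0 : ∀ s a s', 0 ≤ P s a s') (hP1 : ∀ s a, ∑ s', P s a s' = 1)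
    (hd00 : ∀ s, 0 ≤ d0 s) (hd01 : ∑ s, d0 s = 1)
    (hpol0 : ∀ s a, 0 ≤ pol s a) (hpol1 : ∀ s, ∑ a, pol s a = 1)
    (hγ0 : 0 ≤ γ) (hγ1 : γ < 1) (s : S) (a : A) :
    Summable (fun t : ℕ => γ ^ t * occt P pol d0 t s a) := by
  refine Summable.of_norm_bounded (g := fun t => γ ^ t)
    (summable_geometric_of_lt_one hγ0 hγ1) fun t => ?_
  rw [Real.norm_eq_abs, abs_mul, abs_of_nonneg (pow_nonneg hγ0 t),
    abs_of_nonneg (occt_nonneg hP0 hd00 hpol0 t s a)]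
  exact mul_le_of_le_one_right (pow_nonneg hγ0 t)
    (occt_le_one hP0 hP1 hd00 hd01 hpol0 hpol1 t s a)

/-- Swap of the discounted sum with the finite state-action sum. -/
lemma tsum_Eex_swap (hP0 : ∀ s a s', 0 ≤ P s a s') (hP1 : ∀ s a, ∑ s', P s a s' = 1)
    (hd00 : ∀ s, 0 ≤ d0 s) (hd01 : ∑ s, d0 s = 1)
    (hpol0 : ∀ s a, 0 ≤ pol s a) (hpol1 : ∀ s, ∑ a, pol s a = 1)
    (hγ0 : 0 ≤ γ) (hγ1 : γ < 1) (h : S → A → ℝ) :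
    ∑' t : ℕ, γ ^ t * Eex P pol d0 h t
      = ∑ s, ∑ a, (∑' t : ℕ, γ ^ t * occt P pol d0 t s a) * h s a := by
  have hso := summable_occ hP0 hP1 hd00 hd01 hpol0 hpol1 hγ0 hγ1
  have h1 : ∀ (s : S) (a : A),
      Summable (fun t : ℕ => γ ^ t * occt P pol d0 t s a * h s a) :=
    fun s a => (hso s a).mul_right _
  calc ∑' t : ℕ, γ ^ t * Eex P pol d0 h t
      = ∑' t : ℕ, ∑ s, ∑ a, γ ^ t * occt P pol d0 t s a * h s a := by
        refine tsum_congr fun t => ?_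
        simp only [Eex, Finset.mul_sum]
        exact Finset.sum_congr rfl fun s _ => Finset.sum_congr rfl fun a _ => by ring
    _ = ∑ s, ∑' t : ℕ, ∑ a, γ ^ t * occt P pol d0 t s a * h s a :=
        Summable.tsum_finsetSum fun s _ => summable_sum fun a _ => h1 s a
    _ = ∑ s, ∑ a, ∑' t : ℕ, γ ^ t * occt P pol d0 t s a * h s a :=
        Finset.sum_congr rfl fun s _ => Summable.tsum_finsetSum fun a _ => h1 s a
    _ = _ := by
        refine Finset.sum_congr rfl fun s _ => Finset.sum_congr rfl fun a _ => ?_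
        exact tsum_mul_right

/-- Telescoping identity `J_f(π) − J(π) = Σ_t γ^t E_{d_t}[f − T^π f]`. -/
lemma telescope (hP0 : ∀ s a s', 0 ≤ P s a s') (hP1 : ∀ s a, ∑ s', P s a s' = 1)
    (hd00 : ∀ s, 0 ≤ d0 s) (hd01 : ∑ s, d0 s = 1)
    (hpol0 : ∀ s a, 0 ≤ pol s a) (hpol1 : ∀ s, ∑ a, pol s a = 1)
    (hγ0 : 0 ≤ γ) (hγ1 : γ < 1) (R : S → A → ℝ) (f : S → A → ℝ) :
    Jf d0 pol f - Jret P R γ pol d0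
      = ∑' t : ℕ, γ ^ t *
          Eex P pol d0 (fun s a => f s a - bellmanOp P R γ pol f s a) t := by
  have hEs : Summable (fun t : ℕ => γ ^ t * Eex P pol d0 f t) :=
    summable_Eex hP0 hP1 hd00 hd01 hpol0 hpol1 hγ0 hγ1 f
  have hrs : Summable (fun t : ℕ => γ ^ t * Eex P pol d0 R t) :=
    summable_Eex hP0 hP1 hd00 hd01 hpol0 hpol1 hγ0 hγ1 R
  have hshift : Summable (fun t : ℕ => γ ^ (t + 1) * Eex P pol d0 f (t + 1)) :=
    ((summable_nat_add_iff 1).2 hEs)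
  have hstep : ∀ t : ℕ,
      γ ^ t * Eex P pol d0 (fun s a => f s a - bellmanOp P R γ pol f s a) t
        = γ ^ t * Eex P pol d0 f t - γ ^ t * Eex P pol d0 R t
          - γ ^ (t + 1) * Eex P pol d0 f (t + 1) := by
    intro t
    have hb := occt_bellman_step (P := P) (pol := pol) (d0 := d0) R γ f t
    have hsplit : Eex P pol d0 (fun s a => f s a - bellmanOp P R γ pol f s a) t
        = Eex P pol d0 f t
          - (∑ s, ∑ a, occt P pol d0 t s a * bellmanOp P R γ pol f s a) := by
      simp only [Eex, mul_sub, Finset.sum_sub_distrib]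
    rw [hsplit, hb]
    simp only [Eex]
    ring
  have hJf : Jf d0 pol f = Eex P pol d0 f 0 := by
    simp only [Jf, Eex, occt, Finset.mul_sum, mul_assoc]
  have hJret : Jret P R γ pol d0 = ∑' t : ℕ, γ ^ t * Eex P pol d0 R t := rfl
  have hsum : ∑' t : ℕ, γ ^ t *
      Eex P pol d0 (fun s a => f s a - bellmanOp P R γ pol f s a) t
      = (∑' t : ℕ, γ ^ t * Eex P pol d0 f t)
        - (∑' t : ℕ, γ ^ t * Eex P pol d0 R t)
        - ∑' t : ℕ, γ ^ (t + 1) * Eex P pol d0 f (t + 1) := by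
    rw [tsum_congr hstep, Summable.tsum_sub (hEs.sub hrs) hshift, Summable.tsum_sub hEs hrs]
  have hzeroadd : ∑' t : ℕ, γ ^ t * Eex P pol d0 f t
      = γ ^ 0 * Eex P pol d0 f 0
        + ∑' t : ℕ, γ ^ (t + 1) * Eex P pol d0 f (t + 1) :=
    Summable.tsum_eq_zero_add hEs
  rw [hsum, hJf, hJret]
  rw [hzeroadd]
  ring

end aux

/-- **Error propagation under state-action coverage.** If `d^π(s,a) ≤ C_π d^D(s,a)`
for all `(s,a)`, then for any `f : S×A → ℝ`,
`|J_f(π) − J(π)| ≤ (√C_π/(1−γ)) · √(E_{d^D}[(f − T^π f)²])`. -/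
theorem error_propagation_under_coverage {S A : Type*} [Fintype S] [Fintype A]
    (P : S → A → S → ℝ) (R : S → A → ℝ) (Rmax γ : ℝ) (d0 : S → ℝ)
    (pol : S → A → ℝ)
    (hP0 : ∀ s a s', 0 ≤ P s a s') (hP1 : ∀ s a, ∑ s', P s a s' = 1)
    (hR : ∀ s a, 0 ≤ R s a ∧ R s a ≤ Rmax)
    (hγ0 : 0 ≤ γ) (hγ1 : γ < 1)
    (hd00 : ∀ s, 0 ≤ d0 s) (hd01 : ∑ s, d0 s = 1)
    (hpol0 : ∀ s a, 0 ≤ pol s a) (hpol1 : ∀ s, ∑ a, pol s a = 1)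
    (dD : S → A → ℝ)
    (hdD0 : ∀ s a, 0 ≤ dD s a) (hdD1 : ∑ s, ∑ a, dD s a = 1)
    (Cπ : ℝ) (hCπ : 0 ≤ Cπ)
    (hcov : ∀ s a, docc P pol d0 γ s a ≤ Cπ * dD s a)
    (f : S → A → ℝ) :
    |Jf d0 pol f - Jret P R γ pol d0| ≤
      (Real.sqrt Cπ / (1 - γ)) *
        Real.sqrt (∑ s, ∑ a, dD s a * (f s a - bellmanOp P R γ pol f s a) ^ 2) := by
  classical
  have h1γ : (0:ℝ) < 1 - γ := by linarith
  set g : S → A → ℝ := fun s a => f s a - bellmanOp P R γ pol f s a with hg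
  have hgs : ∀ s a, f s a - bellmanOp P R γ pol f s a = g s a := fun _ _ => rfl
  have honn := occt_nonneg hP0 hd00 hpol0
  -- Step 1: telescoping + triangle inequality
  have habsE : ∀ t, |Eex P pol d0 g t| ≤ Eex P pol d0 (fun s a => |g s a|) t := by
    intro t
    calc |∑ s, ∑ a, occt P pol d0 t s a * g s a|
        ≤ ∑ s, |∑ a, occt P pol d0 t s a * g s a| := Finset.abs_sum_le_sum_abs _ _
      _ ≤ ∑ s, ∑ a, |occt P pol d0 t s a * g s a| :=
          Finset.sum_le_sum fun s _ => Finset.abs_sum_le_sum_abs _ _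
      _ = ∑ s, ∑ a, occt P pol d0 t s a * |g s a| := by
          refine Finset.sum_congr rfl fun s _ => Finset.sum_congr rfl fun a _ => ?_
          rw [abs_mul, abs_of_nonneg (honn t s a)]
  have hs1 : Summable (fun t : ℕ => γ ^ t * Eex P pol d0 g t) :=
    summable_Eex hP0 hP1 hd00 hd01 hpol0 hpol1 hγ0 hγ1 g
  have hs2 : Summable (fun t : ℕ => γ ^ t * Eex P pol d0 (fun s a => |g s a|) t) :=
    summable_Eex hP0 hP1 hd00 hd01 hpol0 hpol1 hγ0 hγ1 _
  have habs : |Jf d0 pol f - Jret P R γ pol d0|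
      ≤ ∑' t : ℕ, γ ^ t * Eex P pol d0 (fun s a => |g s a|) t := by
    rw [telescope hP0 hP1 hd00 hd01 hpol0 hpol1 hγ0 hγ1 R f]
    simp only [hgs]
    have hnorm : Summable fun t : ℕ => ‖γ ^ t * Eex P pol d0 g t‖ := by
      simpa only [Real.norm_eq_abs] using hs1.abs
    calc |∑' t : ℕ, γ ^ t * Eex P pol d0 g t|
        = ‖∑' t : ℕ, γ ^ t * Eex P pol d0 g t‖ := (Real.norm_eq_abs _).symm
      _ ≤ ∑' t : ℕ, ‖γ ^ t * Eex P pol d0 g t‖ :=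
          norm_tsum_le_tsum_norm hnorm
      _ ≤ ∑' t : ℕ, γ ^ t * Eex P pol d0 (fun s a => |g s a|) t := by
          refine Summable.tsum_le_tsum (fun t => ?_) hnorm hs2
          rw [Real.norm_eq_abs, abs_mul, abs_of_nonneg (pow_nonneg hγ0 t)]
          exact mul_le_mul_of_nonneg_left (habsE t) (pow_nonneg hγ0 t)
  -- Step 2: swap tsum and finite sums, express via docc
  have hdiv : ∀ s a, (∑' t : ℕ, γ ^ t * occt P pol d0 t s a)
      = docc P pol d0 γ s a / (1 - γ) := by
    intro s a
    rw [docc]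
    field_simp
  have hswap : ∑' t : ℕ, γ ^ t * Eex P pol d0 (fun s a => |g s a|) t
      = (1 - γ)⁻¹ * ∑ s, ∑ a, docc P pol d0 γ s a * |g s a| := by
    rw [tsum_Eex_swap hP0 hP1 hd00 hd01 hpol0 hpol1 hγ0 hγ1]
    rw [Finset.mul_sum]
    refine Finset.sum_congr rfl fun s _ => ?_
    rw [Finset.mul_sum]
    refine Finset.sum_congr rfl fun a _ => ?_
    rw [hdiv s a]
    field_simp
  -- Step 3: total occupancy mass is 1
  have hdocc0 : ∀ s a, 0 ≤ docc P pol d0 γ s a := by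
    intro s a
    exact mul_nonneg h1γ.le (tsum_nonneg fun t =>
      mul_nonneg (pow_nonneg hγ0 t) (honn t s a))
  have hmass : ∑ s, ∑ a, docc P pol d0 γ s a = 1 := by
    have hone := tsum_Eex_swap (P := P) (pol := pol) (d0 := d0)
      hP0 hP1 hd00 hd01 hpol0 hpol1 hγ0 hγ1 (fun _ _ => (1:ℝ))
    have hEone : ∀ t, Eex P pol d0 (fun _ _ => (1:ℝ)) t = 1 := by
      intro t
      simp only [Eex, mul_one]
      exact occt_sum hP1 hd01 hpol1 t
    have hL : ∑' t : ℕ, γ ^ t * Eex P pol d0 (fun _ _ => (1:ℝ)) t = (1 - γ)⁻¹ := by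
      simp only [hEone, mul_one]
      exact tsum_geometric_of_lt_one hγ0 hγ1
    have hR' : ∑ s, ∑ a, (∑' t : ℕ, γ ^ t * occt P pol d0 t s a) = (1 - γ)⁻¹ := by
      rw [hL] at hone
      simpa only [mul_one] using hone.symm
    calc ∑ s, ∑ a, docc P pol d0 γ s a
        = (1 - γ) * ∑ s, ∑ a, (∑' t : ℕ, γ ^ t * occt P pol d0 t s a) := by
          rw [Finset.mul_sum]
          exact Finset.sum_congr rfl fun s _ => by rw [Finset.mul_sum]; rfl
      _ = (1 - γ) * (1 - γ)⁻¹ := by rw [hR']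
      _ = 1 := mul_inv_cancel₀ h1γ.ne'
  -- Step 4: Cauchy–Schwarz with coverage
  have hkey : ∑ s, ∑ a, docc P pol d0 γ s a * |g s a|
      ≤ Real.sqrt Cπ * Real.sqrt (∑ s, ∑ a, dD s a * g s a ^ 2) := by
    set D : S × A → ℝ := fun p => docc P pol d0 γ p.1 p.2 with hD
    have hL : ∑ s, ∑ a, docc P pol d0 γ s a * |g s a|
        = ∑ p : S × A, D p * |g p.1 p.2| :=
      (Fintype.sum_prod_type (fun p : S × A => D p * |g p.1 p.2|)).symm
    have hDsum : ∑ p : S × A, D p = 1 := by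
      rw [Fintype.sum_prod_type]; exact hmass
    have hcs : (∑ p : S × A, D p * |g p.1 p.2|) ^ 2
        ≤ (∑ p : S × A, D p) * ∑ p : S × A, D p * g p.1 p.2 ^ 2 := by
      have h := Finset.sum_mul_sq_le_sq_mul_sq Finset.univ
        (fun p : S × A => Real.sqrt (D p))
        (fun p : S × A => Real.sqrt (D p) * |g p.1 p.2|)
      have e1 : ∀ p : S × A, Real.sqrt (D p) * (Real.sqrt (D p) * |g p.1 p.2|)
          = D p * |g p.1 p.2| := by
        intro p
        rw [← mul_assoc, Real.mul_self_sqrt (hdocc0 p.1 p.2)]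
      have e2 : ∀ p : S × A, Real.sqrt (D p) ^ 2 = D p :=
        fun p => Real.sq_sqrt (hdocc0 p.1 p.2)
      have e3 : ∀ p : S × A, (Real.sqrt (D p) * |g p.1 p.2|) ^ 2
          = D p * g p.1 p.2 ^ 2 := by
        intro p
        rw [mul_pow, Real.sq_sqrt (hdocc0 p.1 p.2), sq_abs]
      simpa only [e1, e2, e3] using h
    have hcov' : ∑ p : S × A, D p * g p.1 p.2 ^ 2
        ≤ Cπ * ∑ s, ∑ a, dD s a * g s a ^ 2 := by
      rw [Fintype.sum_prod_type, Finset.mul_sum]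
      refine Finset.sum_le_sum fun s _ => ?_
      rw [Finset.mul_sum]
      refine Finset.sum_le_sum fun a _ => ?_
      calc docc P pol d0 γ s a * g s a ^ 2
          ≤ (Cπ * dD s a) * g s a ^ 2 :=
            mul_le_mul_of_nonneg_right (hcov s a) (sq_nonneg _)
        _ = Cπ * (dD s a * g s a ^ 2) := by ring
    have hLnn : 0 ≤ ∑ p : S × A, D p * |g p.1 p.2| :=
      Finset.sum_nonneg fun p _ => mul_nonneg (hdocc0 p.1 p.2) (abs_nonneg _)
    have hRnn : 0 ≤ Cπ * ∑ s, ∑ a, dD s a * g s a ^ 2 :=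
      mul_nonneg hCπ (Finset.sum_nonneg fun s _ => Finset.sum_nonneg fun a _ =>
        mul_nonneg (hdD0 s a) (sq_nonneg _))
    rw [hL, ← Real.sqrt_mul hCπ]
    rw [Real.le_sqrt hLnn hRnn]
    calc (∑ p : S × A, D p * |g p.1 p.2|) ^ 2
        ≤ (∑ p : S × A, D p) * ∑ p : S × A, D p * g p.1 p.2 ^ 2 := hcs
      _ = ∑ p : S × A, D p * g p.1 p.2 ^ 2 := by rw [hDsum, one_mul]
      _ ≤ Cπ * ∑ s, ∑ a, dD s a * g s a ^ 2 := hcov'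
  -- Assemble
  have := habs.trans (le_of_eq hswap)
  have hfinal : |Jf d0 pol f - Jret P R γ pol d0|
      ≤ (1 - γ)⁻¹ * (Real.sqrt Cπ * Real.sqrt (∑ s, ∑ a, dD s a * g s a ^ 2)) :=
    this.trans (mul_le_mul_of_nonneg_left hkey (inv_nonneg.mpr h1γ.le))
  calc |Jf d0 pol f - Jret P R γ pol d0|
      ≤ (1 - γ)⁻¹ * (Real.sqrt Cπ * Real.sqrt (∑ s, ∑ a, dD s a * g s a ^ 2)) :=
        hfinal
    _ = (Real.sqrt Cπ / (1 - γ)) *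
        Real.sqrt (∑ s, ∑ a, dD s a * (f s a - bellmanOp P R γ pol f s a) ^ 2) := by
        simp only [hgs]
        ring
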